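/- Let n = m_1 m_2 with m_1, m_2 ≥ 1, let A ⊆ Z_n, A_1 ⊆ Z_{m_1}, A_2 ⊆ Z_{m_2}, and suppose f_{n,m_1}(A) ⊆ A_1 and f_{n,m_2}(A) ⊆ A_2. Let k, l ≥ 1 and suppose there exists a sequence of length k − 1 in Z_{m_1} having no nonempty subsequence of consecutive terms which is an A_1-weighted zero-sum sequence, and a sequence of length l − 1 in Z_{m_2} having no nonempty subsequence of consecutive terms which is an A_2-weighted zero-sum sequence. Then there exists a sequence of length kl − 1 in Z_n having no nonempty subsequence of consecutive terms which is an A-weighted zero-sum sequence. (In particular C_A(n) ≥ C_{A_1}(m_1) · C_{A_2}(m_2).) -/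

import Mathlib

/-- A list `L` over `ZMod n` is an `A`-weighted zero-sum sequence if there are weights
`a₁, …, a_k ∈ A` (one per term) with `a₁x₁ + ⋯ + a_kx_k = 0`. -/
def IsWeightedZeroSum {n : ℕ} (A : Set (ZMod n)) (L : List (ZMod n)) : Prop :=
  ∃ a : List (ZMod n), a.length = L.length ∧ (∀ w ∈ a, w ∈ A) ∧
    (List.zipWith (· * ·) a L).sum = 0

/-- `L` has a nonempty subsequence of consecutive terms which is an
`A`-weighted zero-sum sequence. -/
def HasConsecWZS {n : ℕ} (A : Set (ZMod n)) (L : List (ZMod n)) : Prop :=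
  ∃ l₁ l₂ l₃ : List (ZMod n), L = l₁ ++ l₂ ++ l₃ ∧ l₂ ≠ [] ∧ IsWeightedZeroSum A l₂

namespace CLBAux

open List

/-- Structure of a decomposition that starts exactly at the beginning of a block. -/
lemma struct2 {α β : Type*} (X : List α) (s : β → α) :
    ∀ (M : List β) (l₂ l₃ : List α),
      X ++ M.flatMap (fun w => s w :: X) = l₂ ++ l₃ →
      (∃ h', X = l₂ ++ h') ∨
      (∃ (u : List β) (w : β) (v : List β) (h h' : List α),
        M = u ++ w :: v ∧ l₂ = X ++ u.flatMap (fun w => s w :: X) ++ s w :: h ∧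
        X = h ++ h') := by
  intro M
  induction M with
  | nil =>
    intro l₂ l₃ hEq
    simp only [flatMap_nil, append_nil] at hEq
    exact Or.inl ⟨l₃, hEq⟩
  | cons w M' ih =>
    intro l₂ l₃ hEq
    simp only [flatMap_cons] at hEq
    -- X ++ (s w :: X ++ M'.flatMap f) = l₂ ++ l₃
    rw [show X ++ ((s w :: X) ++ M'.flatMap (fun w => s w :: X))
        = X ++ (s w :: (X ++ M'.flatMap (fun w => s w :: X))) by simp] at hEq
    rcases List.append_eq_append_iff.mp hEq.symm with ⟨e, hX, he⟩ | ⟨e, hl₂, he⟩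
    · exact Or.inl ⟨e, hX⟩
    · -- l₂ = X ++ e, e ++ l₃ = s w :: (X ++ rest)
      cases e with
      | nil => exact Or.inl ⟨[], by simp [hl₂]⟩
      | cons e0 e' =>
        have he2 : s w :: (X ++ M'.flatMap (fun w => s w :: X)) = e0 :: (e' ++ l₃) := by
          simpa using he
        have he0 : e0 = s w := (List.cons_eq_cons.mp he2).1.symm
        have he' : X ++ M'.flatMap (fun w => s w :: X) = e' ++ l₃ :=
          (List.cons_eq_cons.mp he2).2
        rcases ih e' l₃ he' with ⟨h', hXe⟩ | ⟨u, w₀, v, h, h', hM', hl, hXs⟩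
        · refine Or.inr ⟨[], w, M', e', h', rfl, ?_, hXe⟩
          simp [hl₂, he0]
        · refine Or.inr ⟨w :: u, w₀, v, h, h', by simp [hM'], ?_, hXs⟩
          subst he0
          rw [hl₂, hl]
          simp
/-- General window-structure lemma for `X ++ M.flatMap (fun w => s w :: X)`. -/
lemma struct {α β : Type*} (X : List α) (s : β → α) :
    ∀ (M : List β) (l₁ l₂ l₃ : List α), l₂ ≠ [] →
      X ++ M.flatMap (fun w => s w :: X) = l₁ ++ l₂ ++ l₃ →
      (∃ u v, X = u ++ l₂ ++ v) ∨
      (∃ (t h : List α) (u mid : List β) (w : β) (v : List β),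
        M = u ++ (mid ++ [w]) ++ v ∧
        l₂ = t ++ mid.flatMap (fun w => s w :: X) ++ s w :: h ∧
        (∃ t', X = t' ++ t) ∧ (∃ h', X = h ++ h')) := by
  intro M
  induction M with
  | nil =>
    intro l₁ l₂ l₃ _ hEq
    simp only [flatMap_nil, append_nil, append_assoc] at hEq
    exact Or.inl ⟨l₁, l₃, by simpa [append_assoc] using hEq⟩
  | cons w M' ih =>
    intro l₁ l₂ l₃ hne hEq
    rw [append_assoc] at hEq
    rcases List.append_eq_append_iff.mp hEq.symm with ⟨e, hX, he⟩ | ⟨e, hl₁, he⟩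
    · -- X = l₁ ++ e,  l₂ ++ l₃ = e ++ flatMap
      rcases List.append_eq_append_iff.mp he with ⟨e₂, he2, _⟩ | ⟨e₂, hl₂, he₂⟩
      · -- e = l₂ ++ e₂ : window inside first block
        exact Or.inl ⟨l₁, e₂, by rw [hX, he2, append_assoc]⟩
      ·
        cases e₂ with
        | nil => exact Or.inl ⟨l₁, [], by rw [hX, hl₂]; simp⟩
        | cons c e₃ =>
          -- (w :: M').flatMap f = (c :: e₃) ++ l₃
          have hbind : (s w :: (X ++ M'.flatMap (fun w => s w :: X))) = c :: (e₃ ++ l₃) := by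
            simpa [append_assoc] using he₂
          have hc : c = s w := (List.cons_eq_cons.mp hbind).1.symm
          have hrest : X ++ M'.flatMap (fun w => s w :: X) = e₃ ++ l₃ :=
            (List.cons_eq_cons.mp hbind).2
          rcases struct2 X s M' e₃ l₃ hrest with ⟨h', hXe⟩ | ⟨u, w₀, v, h, h', hM', hl, hXs⟩
          · refine Or.inr ⟨e, e₃, [], [], w, M', by simp, ?_, ⟨l₁, hX⟩, ⟨h', hXe⟩⟩
            rw [hl₂, hc]; simp
          · refine Or.inr ⟨e, h, [], w :: u, w₀, v, by simp [hM'], ?_, ⟨l₁, hX⟩, ⟨h', hXs⟩⟩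
            rw [hl₂, hc, hl]; simp
    · -- l₁ = X ++ e, flatMap (w :: M') = e ++ (l₂ ++ l₃)
      have he' : s w :: (X ++ M'.flatMap (fun w => s w :: X)) = e ++ (l₂ ++ l₃) := by
        simpa [append_assoc] using he
      cases e with
      | nil =>
        -- l₂ starts with s w
        cases l₂ with
        | nil => exact absurd rfl hne
        | cons c l₂' =>
          simp only [nil_append, cons_append] at he'
          have hc : c = s w := (List.cons_eq_cons.mp he').1.symm
          have hrest : X ++ M'.flatMap (fun w => s w :: X) = l₂' ++ l₃ :=
            (List.cons_eq_cons.mp he').2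
          rcases struct2 X s M' l₂' l₃ hrest with ⟨h', hXe⟩ | ⟨u, w₀, v, h, h', hM', hl, hXs⟩
          · exact Or.inr ⟨[], l₂', [], [], w, M', by simp, by simp [hc], ⟨X, by simp⟩, ⟨h', hXe⟩⟩
          · refine Or.inr ⟨[], h, [], w :: u, w₀, v, by simp [hM'], ?_, ⟨X, by simp⟩, ⟨h', hXs⟩⟩
            rw [hc, hl]; simp
      | cons c e' =>
        have hrest : X ++ M'.flatMap (fun w => s w :: X) = e' ++ (l₂ ++ l₃) := by
          simp only [cons_append] at he'
          exact (List.cons_eq_cons.mp he').2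
        rcases ih e' l₂ l₃ hne (by rw [hrest, append_assoc]) with hL | ⟨t, h, u, mid, w₀, v, hM', hl, ht, hh⟩
        · exact Or.inl hL
        · exact Or.inr ⟨t, h, w :: u, mid, w₀, v, by simp [hM'], hl, ht, hh⟩

lemma length_flatMap_cons {α β : Type*} (X : List α) (s : β → α) :
    ∀ M : List β, (M.flatMap (fun w => s w :: X)).length = M.length * (X.length + 1)
  | [] => by simp
  | w :: M => by
      rw [List.flatMap_cons, List.length_append, List.length_cons,
        length_flatMap_cons X s M, List.length_cons]
      ring

lemma zipWith_mul_sum_hom {n m : ℕ} (g : ZMod n →+* ZMod m) :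
    ∀ (a L : List (ZMod n)),
      g (List.zipWith (· * ·) a L).sum
        = (List.zipWith (· * ·) (a.map g) (L.map g)).sum
  | [], _ => by simp
  | _ :: _, [] => by simp
  | x :: a, y :: L => by
      simp [map_add, map_mul, zipWith_mul_sum_hom g a L]

lemma zipWith_mul_sum_zero {n m : ℕ} (g : ZMod n →+* ZMod m) :
    ∀ (a L : List (ZMod n)), (∀ e ∈ L, g e = 0) →
      g (List.zipWith (· * ·) a L).sum = 0
  | [], _, _ => by simp
  | _ :: _, [], _ => by simp
  | x :: a, y :: L, hL => by
      simp [map_add, map_mul, hL y (by simp),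
        zipWith_mul_sum_zero g a L (fun e he => hL e (by simp [he]))]

lemma zipWith_mul_sum_mul_left {n : ℕ} (c : ZMod n) :
    ∀ (a L : List (ZMod n)),
      (List.zipWith (· * ·) a (L.map (fun x => c * x))).sum
        = c * (List.zipWith (· * ·) a L).sum
  | [], _ => by simp
  | _ :: _, [] => by simp
  | x :: a, y :: L => by
      simp [zipWith_mul_sum_mul_left c a L]; ring

end CLBAux

/-- the multiplicative lower-bound lemma for `C_A(n)` with `n = m₁m₂`. -/
theorem C_lower_bound_multiplicative (m₁ m₂ : ℕ) (hm₁ : 1 ≤ m₁) (hm₂ : 1 ≤ m₂)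
    (A : Set (ZMod (m₁ * m₂))) (A₁ : Set (ZMod m₁)) (A₂ : Set (ZMod m₂))
    (hA₁ : ∀ a ∈ A, ZMod.castHom (⟨m₂, rfl⟩ : m₁ ∣ m₁ * m₂) (ZMod m₁) a ∈ A₁)
    (hA₂ : ∀ a ∈ A, ZMod.castHom (⟨m₁, mul_comm m₁ m₂⟩ : m₂ ∣ m₁ * m₂) (ZMod m₂) a ∈ A₂)
    (k l : ℕ) (hk : 1 ≤ k) (hl : 1 ≤ l)
    (hS₁ : ∃ L : List (ZMod m₁), L.length = k - 1 ∧ ¬ HasConsecWZS A₁ L)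
    (hS₂ : ∃ L : List (ZMod m₂), L.length = l - 1 ∧ ¬ HasConsecWZS A₂ L) :
    ∃ L : List (ZMod (m₁ * m₂)), L.length = k * l - 1 ∧ ¬ HasConsecWZS A L := by
  classical
  open List CLBAux in
  obtain ⟨L₁, hL₁len, hL₁⟩ := hS₁
  obtain ⟨L₂, hL₂len, hL₂⟩ := hS₂
  haveI : NeZero m₁ := ⟨by omega⟩
  haveI : NeZero m₂ := ⟨by omega⟩
  haveI : NeZero (m₁ * m₂) := ⟨by positivity⟩
  set f₁ : ZMod (m₁ * m₂) →+* ZMod m₁ := ZMod.castHom (⟨m₂, rfl⟩ : m₁ ∣ m₁ * m₂) (ZMod m₁) with hf₁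
  set f₂ : ZMod (m₁ * m₂) →+* ZMod m₂ :=
    ZMod.castHom (⟨m₁, mul_comm m₁ m₂⟩ : m₂ ∣ m₁ * m₂) (ZMod m₂) with hf₂
  set ι : ZMod m₁ → ZMod (m₁ * m₂) :=
    fun v => (m₂ : ZMod (m₁ * m₂)) * ((v.val : ℕ) : ZMod (m₁ * m₂)) with hι
  set s : ZMod m₂ → ZMod (m₁ * m₂) := fun w => ((w.val : ℕ) : ZMod (m₁ * m₂)) with hs
  set X : List (ZMod (m₁ * m₂)) := L₁.map ι with hX
  -- key algebraic facts
  have hf₂ι : ∀ v, f₂ (ι v) = 0 := by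
    intro v
    simp [hι, hf₂, map_mul, map_natCast, ZMod.natCast_self]
  have hf₂s : ∀ w, f₂ (s w) = w := by
    intro w
    simp [hs, hf₂, map_natCast, ZMod.natCast_val, ZMod.cast_id]
  have hf₁lift : ∀ v : ZMod m₁, f₁ (((v.val : ℕ) : ZMod (m₁ * m₂))) = v := by
    intro v
    simp [hf₁, map_natCast, ZMod.natCast_val, ZMod.cast_id]
  have hmulself : ∀ c : ZMod (m₁ * m₂), (m₂ : ZMod (m₁ * m₂)) * c = 0 → f₁ c = 0 := by
    intro c hc
    have hc' : ((m₂ * c.val : ℕ) : ZMod (m₁ * m₂)) = 0 := by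
      push_cast
      rw [ZMod.natCast_val, ZMod.cast_id]
      exact hc
    rw [ZMod.natCast_eq_zero_iff] at hc'
    have hdvd : m₁ ∣ c.val := by
      rcases hc' with ⟨d, hd⟩
      exact ⟨d, Nat.eq_of_mul_eq_mul_left hm₂ (by rw [hd]; ring)⟩
    have : f₁ c = ((c.val : ℕ) : ZMod m₁) := by
      conv_lhs => rw [show c = ((c.val : ℕ) : ZMod (m₁ * m₂)) by rw [ZMod.natCast_val, ZMod.cast_id]]
      simp [hf₁, map_natCast]
    rw [this, ZMod.natCast_eq_zero_iff]
    exact hdvd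
  -- the extraction lemma (case B core)
  have extract : ∀ (mid : List (ZMod m₂)) (a : List (ZMod (m₁ * m₂))),
      a.length = (mid.flatMap (fun w => s w :: X)).length → (∀ x ∈ a, x ∈ A) →
      ∃ b : List (ZMod m₂), b.length = mid.length ∧ (∀ x ∈ b, x ∈ A₂) ∧
        (List.zipWith (· * ·) b mid).sum
          = f₂ (List.zipWith (· * ·) a (mid.flatMap (fun w => s w :: X))).sum := by
    intro mid
    induction mid with
    | nil => intro a _ _; exact ⟨[], by simp, by simp, by simp⟩
    | cons w mid' ih =>
      intro a hlen hmem
      have hlen' : a.length = X.length + 1 + (mid'.flatMap (fun w => s w :: X)).length := by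
        rw [hlen, List.flatMap_cons, List.length_append, List.length_cons]
      cases a with
      | nil => simp at hlen'; omega
      | cons a₀ a' =>
        have ha'len : a'.length = X.length + (mid'.flatMap (fun w => s w :: X)).length := by
          simp only [List.length_cons] at hlen'; omega
        have hsplit : a' = a'.take X.length ++ a'.drop X.length := (List.take_append_drop _ _).symm
        have htlen : (a'.take X.length).length = X.length := by
          rw [List.length_take]; omega
        have hdlen : (a'.drop X.length).length = (mid'.flatMap (fun w => s w :: X)).length := by
          rw [List.length_drop]; omega
        obtain ⟨b', hb'len, hb'mem, hb'sum⟩ := ih (a'.drop X.length) hdlen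
          (fun x hx => hmem x (by simp [List.mem_of_mem_drop hx]))
        refine ⟨f₂ a₀ :: b', by simp [hb'len], ?_, ?_⟩
        · intro x hx
          rcases List.mem_cons.mp hx with h | h
          · exact h ▸ hA₂ a₀ (hmem a₀ (by simp))
          · exact hb'mem x h
        · rw [List.flatMap_cons]
          have hz : List.zipWith (· * ·) (a₀ :: a')
              ((s w :: X) ++ mid'.flatMap (fun w => s w :: X))
              = (a₀ * s w) :: (List.zipWith (· * ·) (a'.take X.length) X
                ++ List.zipWith (· * ·) (a'.drop X.length) (mid'.flatMap (fun w => s w :: X))) := by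
            rw [List.cons_append, List.zipWith_cons_cons]
            congr 1
            conv_lhs => rw [hsplit]
            exact List.zipWith_append htlen
          rw [hz]
          simp only [List.zipWith_cons_cons, List.sum_cons, List.sum_append, map_add,
            map_mul, hf₂s]
          have hXzero : f₂ (List.zipWith (· * ·) (a'.take X.length) X).sum = 0 := by
            refine zipWith_mul_sum_zero f₂ _ _ ?_
            intro e he
            rcases List.mem_map.mp (hX ▸ he) with ⟨v, _, rfl⟩
            exact hf₂ι v
          rw [hXzero, hb'sum]
          ring
  refine ⟨X ++ L₂.flatMap (fun w => s w :: X), ?_, ?_⟩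
  · -- length computation
    obtain ⟨k', rfl⟩ : ∃ k', k = k' + 1 := ⟨k - 1, by omega⟩
    obtain ⟨l', rfl⟩ : ∃ l', l = l' + 1 := ⟨l - 1, by omega⟩
    have hXlen : X.length = k' := by simp [hX, hL₁len]
    have hblen : (L₂.flatMap (fun w => s w :: X)).length = l' * (k' + 1) := by
      rw [length_flatMap_cons X s L₂, hL₂len, hXlen]
      simp
    simp only [List.length_append, hXlen, hblen]
    have hexp : (k' + 1) * (l' + 1) = k' * l' + k' + l' + 1 := by ring
    rw [hexp]
    have : l' * (k' + 1) = l' * k' + l' := by ring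
    rw [this]
    have : k' * l' = l' * k' := by ring
    omega
  · -- no consecutive weighted zero-sum
    rintro ⟨l₁, l₂, l₃, hsplit, hne, a, halen, hamem, hasum⟩
    rcases struct X s L₂ l₁ l₂ l₃ hne hsplit
      with ⟨u, v, hXdec⟩ | ⟨t, h, u, mid, w, v, hM, hl₂, ⟨t', ht'⟩, ⟨h', hh'⟩⟩
    · -- Case A : window inside one block
      rw [hX, List.append_assoc] at hXdec
      rcases List.map_eq_append_iff.mp hXdec with ⟨p, rest, hL₁dec, hp, hrest⟩
      rcases List.map_eq_append_iff.mp hrest with ⟨q, r, hrestdec, hq, hr⟩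
      have hqne : q ≠ [] := by
        intro hqnil
        apply hne
        rw [← hq, hqnil]; rfl
      apply hL₁
      refine ⟨p, q, r, by rw [hL₁dec, hrestdec, List.append_assoc], hqne, a.map f₁, ?_, ?_, ?_⟩
      · have : q.length = l₂.length := by rw [← hq, List.length_map]
        simp [halen, this]
      · intro x hx
        rcases List.mem_map.mp hx with ⟨y, hy, rfl⟩
        exact hA₁ y (hamem y hy)
      · -- the weighted sum over q vanishes in ZMod m₁
        have hl₂eq : l₂ = (q.map (fun v => ((v.val : ℕ) : ZMod (m₁ * m₂)))).map
            (fun x => (m₂ : ZMod (m₁ * m₂)) * x) := by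
          rw [← hq, hι]
          simp [List.map_map, Function.comp]
        set qq : List (ZMod (m₁ * m₂)) := q.map (fun v => ((v.val : ℕ) : ZMod (m₁ * m₂))) with hqq
        have hsum' : (m₂ : ZMod (m₁ * m₂)) * (List.zipWith (· * ·) a qq).sum = 0 := by
          rw [← zipWith_mul_sum_mul_left, ← hl₂eq]
          exact hasum
        have hzero := hmulself _ hsum'
        rw [zipWith_mul_sum_hom f₁ a qq] at hzero
        have hmapq : qq.map f₁ = q := by
          rw [hqq, List.map_map]
          have : (f₁ ∘ fun v : ZMod m₁ => ((v.val : ℕ) : ZMod (m₁ * m₂))) = id := by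
            funext v; exact hf₁lift v
          rw [this, List.map_id]
        rw [hmapq] at hzero
        exact hzero
    · -- Case B : window crosses separators
      apply hL₂
      -- split the weights along l₂ = t ++ mid.flatMap f ++ (s w :: h)
      set B := mid.flatMap (fun w => s w :: X) with hB
      have hl₂len : l₂.length = t.length + B.length + (1 + h.length) := by
        rw [hl₂]; simp; omega
      set a₁ := a.take t.length with ha₁
      set arest := a.drop t.length with harest
      set a₂ := arest.take B.length with ha₂
      set a₃ := arest.drop B.length with ha₃
      have halen' : a.length = l₂.length := halen
      have ha₁len : a₁.length = t.length := by rw [ha₁, List.length_take]; omega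
      have harestlen : arest.length = B.length + (1 + h.length) := by
        rw [harest, List.length_drop]; omega
      have ha₂len : a₂.length = B.length := by rw [ha₂, List.length_take]; omega
      have ha₃len : a₃.length = 1 + h.length := by rw [ha₃, List.length_drop]; omega
      have hadec : a = a₁ ++ a₂ ++ a₃ := by
        rw [ha₁, ha₂, ha₃, harest, List.append_assoc, List.take_append_drop,
          List.take_append_drop]
      have hzip : List.zipWith (· * ·) a l₂
          = List.zipWith (· * ·) a₁ t ++ List.zipWith (· * ·) a₂ B
            ++ List.zipWith (· * ·) a₃ (s w :: h) := by
        rw [hadec, hl₂]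
        rw [List.append_assoc, List.append_assoc]
        rw [List.zipWith_append ha₁len]
        rw [List.zipWith_append ha₂len]
        simp [List.append_assoc]
      -- a₃ is nonempty
      have ha₃ne : a₃ ≠ [] := by
        intro hnil
        rw [hnil] at ha₃len
        simp at ha₃len
        omega
      obtain ⟨a₀, a₄, ha₃dec⟩ := List.exists_cons_of_ne_nil ha₃ne
      obtain ⟨b, hblen, hbmem, hbsum⟩ := extract mid a₂ ha₂len
        (fun x hx => hamem x (by rw [hadec]; simp [hx]))
      -- apply f₂ to the total sum
      have htzero : f₂ (List.zipWith (· * ·) a₁ t).sum = 0 := by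
        refine zipWith_mul_sum_zero f₂ _ _ ?_
        intro e he
        have heX : e ∈ X := by rw [ht']; exact List.mem_append_right t' he
        rcases List.mem_map.mp (hX ▸ heX) with ⟨v, _, rfl⟩
        exact hf₂ι v
      have hhzero : f₂ (List.zipWith (· * ·) a₄ h).sum = 0 := by
        refine zipWith_mul_sum_zero f₂ _ _ ?_
        intro e he
        have heX : e ∈ X := by rw [hh']; exact List.mem_append_left h' he
        rcases List.mem_map.mp (hX ▸ heX) with ⟨v, _, rfl⟩
        exact hf₂ι v
      have hkey : (List.zipWith (· * ·) (b ++ [f₂ a₀]) (mid ++ [w])).sum = 0 := by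
        rw [List.zipWith_append hblen, List.sum_append]
        have : (List.zipWith (· * ·) [f₂ a₀] [w]).sum = f₂ a₀ * w := by simp
        rw [this, hbsum]
        have := congrArg f₂ hasum
        rw [hzip] at this
        simp only [List.sum_append, map_add, map_zero] at this
        rw [htzero] at this
        rw [ha₃dec] at this
        simp only [List.zipWith_cons_cons, List.sum_cons, map_add, map_mul, hf₂s] at this
        rw [hhzero] at this
        -- this : 0 + (f₂ sum a₂ B + (f₂ a₀ * w + 0)) = 0
        rw [← this]
        ring
      refine ⟨u, mid ++ [w], v, hM, by simp, b ++ [f₂ a₀], by simp [hblen], ?_, hkey⟩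
      intro x hx
      rcases List.mem_append.mp hx with hxb | hxw
      · exact hbmem x hxb
      · have : x = f₂ a₀ := by simpa using hxw
        subst this
        apply hA₂
        apply hamem
        rw [hadec, ha₃dec]
        simp
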